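/- Let d ≥ 1 be an integer and α, μ real with α > d+1 and μ > 0. The rational function of the nonnegative integer m given by R(m) = [(α+m-1)(α+m-2)⋯(α+m-d)] / [(μ(α+m)-1)(μ(α+m)-2)⋯(μ(α+m)-d)] is independent of m (i.e., constant for all integers m ≥ 0) if and only if μ = 1. -/

import Mathlib

open Finset

theorem stmt7 (d : ℕ) (hd : 1 ≤ d) (α μ : ℝ) (hα : α > d + 1) (hμ : 0 < μ)
    (hμα : μ * α > d) :
    (∀ m : ℕ,
        (∏ i ∈ Finset.range d, (α + m - (i + 1))) /
          (∏ i ∈ Finset.range d, (μ * (α + m) - (i + 1))) =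
        (∏ i ∈ Finset.range d, (α - (i + 1))) /
          (∏ i ∈ Finset.range d, (μ * α - (i + 1)))) ↔ μ = 1 := by
  have hib : ∀ i ∈ Finset.range d, ((i : ℝ) + 1) ≤ d := by
    intro i hi
    have := Finset.mem_range.mp hi
    exact_mod_cast Nat.succ_le_of_lt this
  have hN0 : (0:ℝ) < ∏ i ∈ Finset.range d, (α - (i + 1)) := by
    apply Finset.prod_pos; intro i hi; have := hib i hi; linarith
  have hD0 : (0:ℝ) < ∏ i ∈ Finset.range d, (μ * α - (i + 1)) := by
    apply Finset.prod_pos; intro i hi; have := hib i hi; linarith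
  constructor
  · intro h
    have hDm : ∀ m : ℕ, (0:ℝ) < ∏ i ∈ Finset.range d, (μ * (α + m) - (i + 1)) := by
      intro m; apply Finset.prod_pos; intro i hi
      have h1 := hib i hi
      have h2 : (0:ℝ) ≤ μ * m := by positivity
      nlinarith
    have hcross : ∀ m : ℕ,
        (∏ i ∈ Finset.range d, (α + m - (i + 1))) * (∏ i ∈ Finset.range d, (μ * α - (i + 1)))
          = (∏ i ∈ Finset.range d, (α - (i + 1))) *
            ∏ i ∈ Finset.range d, (μ * (α + m) - (i + 1)) := by
      intro m
      exact (div_eq_div_iff (hDm m).ne' hD0.ne').mp (h m)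
    -- polynomial identity
    set p : Polynomial ℝ :=
      (∏ i ∈ Finset.range d, (Polynomial.X + Polynomial.C (α - (i + 1)))) *
          Polynomial.C (∏ i ∈ Finset.range d, (μ * α - (i + 1))) -
        Polynomial.C (∏ i ∈ Finset.range d, (α - (i + 1))) *
          ∏ i ∈ Finset.range d, (Polynomial.C μ * Polynomial.X +
            Polynomial.C (μ * α - (i + 1))) with hp
    have hev : ∀ x : ℝ, p.eval x =
        (∏ i ∈ Finset.range d, (x + (α - (i + 1)))) *
          (∏ i ∈ Finset.range d, (μ * α - (i + 1))) -
        (∏ i ∈ Finset.range d, (α - (i + 1))) *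
          ∏ i ∈ Finset.range d, (μ * x + (μ * α - (i + 1))) := by
      intro x
      simp [hp, Polynomial.eval_prod]
    have hroot : ∀ m : ℕ, p.IsRoot (m : ℝ) := by
      intro m
      have h1 : (∏ i ∈ Finset.range d, ((m:ℝ) + (α - (i + 1)))) =
          ∏ i ∈ Finset.range d, (α + m - (i + 1)) := by
        apply Finset.prod_congr rfl; intro i _; ring
      have h2 : (∏ i ∈ Finset.range d, (μ * (m:ℝ) + (μ * α - (i + 1)))) =
          ∏ i ∈ Finset.range d, (μ * (α + m) - (i + 1)) := by
        apply Finset.prod_congr rfl; intro i _; ring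
      have := hcross m
      simp only [Polynomial.IsRoot, hev, h1, h2]
      linarith
    have hp0 : p = 0 := by
      apply Polynomial.eq_zero_of_infinite_isRoot
      exact Set.infinite_of_injective_forall_mem (f := fun m : ℕ => (m : ℝ))
        (fun a b hab => Nat.cast_injective hab) hroot
    have heq : ∀ x : ℝ,
        (∏ i ∈ Finset.range d, (x + (α - (i + 1)))) *
          (∏ i ∈ Finset.range d, (μ * α - (i + 1))) =
        (∏ i ∈ Finset.range d, (α - (i + 1))) *
          ∏ i ∈ Finset.range d, (μ * x + (μ * α - (i + 1))) := by
      intro x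
      have := hev x
      rw [hp0] at this
      simp at this
      linarith
    -- evaluate at x = 1 - α : get μ ∈ {1,...,d}
    have h1 := heq (1 - α)
    have hz1 : (∏ i ∈ Finset.range d, ((1 - α) + (α - (i + 1)))) = 0 := by
      apply Finset.prod_eq_zero (Finset.mem_range.mpr (by omega : 0 < d))
      push_cast; ring
    rw [hz1, zero_mul] at h1
    have hz1' : (∏ i ∈ Finset.range d, (μ * (1 - α) + (μ * α - (i + 1)))) = 0 := by
      by_contra hne
      exact hne (by
        have := mul_eq_zero.mp h1.symm
        rcases this with h | h
        · exact absurd h hN0.ne'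
        · exact h)
    obtain ⟨i, hi, hiz⟩ := Finset.prod_eq_zero_iff.mp hz1'
    have hμ1 : (1:ℝ) ≤ μ := by nlinarith [hib i hi]
    -- evaluate at x = d - α : get μ * d ≤ d
    have h2 := heq ((d:ℝ) - α)
    have hz2 : (∏ i ∈ Finset.range d, (((d:ℝ) - α) + (α - (i + 1)))) = 0 := by
      apply Finset.prod_eq_zero (Finset.mem_range.mpr (by omega : d - 1 < d))
      have : ((d - 1 : ℕ) : ℝ) = (d:ℝ) - 1 := by
        have : (1:ℕ) ≤ d := hd
        push_cast [this]; ring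
      rw [this]; ring
    rw [hz2, zero_mul] at h2
    have hz2' : (∏ i ∈ Finset.range d, (μ * ((d:ℝ) - α) + (μ * α - (i + 1)))) = 0 := by
      rcases mul_eq_zero.mp h2.symm with h | h
      · exact absurd h hN0.ne'
      · exact h
    obtain ⟨j, hj, hjz⟩ := Finset.prod_eq_zero_iff.mp hz2'
    have hdpos : (0:ℝ) < d := by exact_mod_cast hd
    have hμ2 : μ ≤ 1 := by nlinarith [hib j hj]
    linarith
  · intro hμ1 m
    subst hμ1
    simp only [one_mul]
    rw [div_self, div_self]
    · exact hN0.ne'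
    · apply ne_of_gt
      apply Finset.prod_pos; intro i hi
      have := hib i hi
      have : (0:ℝ) ≤ (m:ℝ) := Nat.cast_nonneg m
      nlinarith [hib i hi]
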